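/- Let W_1, ..., W_d be subspaces of R^p with orthogonal projections P_1, ..., P_d. Fix k and suppose y = ỹ + ỹ⊥ with ỹ ∈ W_k, ỹ ≠ 0, ỹ⊥ ⊥ W_k, and ‖ỹ⊥‖ ≤ ε‖ỹ‖ for some ε ≥ 0. If η := max_{j≠k} ‖P_j P_k‖ satisfies η < 1 − ε, then for every j ≠ k, ‖P_j y‖ < ‖P_k y‖. In particular, k = argmax_j ‖P_j y‖ and classification by maximal projection energy is correct. -/

import Mathlib

noncomputable def proj {p : ℕ} (K : Submodule ℝ (EuclideanSpace ℝ (Fin p))) :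
    EuclideanSpace ℝ (Fin p) →L[ℝ] EuclideanSpace ℝ (Fin p) :=
  K.subtypeL.comp (K.orthogonalProjection)

lemma proj_norm_apply_le {p : ℕ} (K : Submodule ℝ (EuclideanSpace ℝ (Fin p)))
    (v : EuclideanSpace ℝ (Fin p)) : ‖proj K v‖ ≤ ‖v‖ := by
  have : ‖proj K v‖ = ‖K.orthogonalProjection v‖ := rfl
  rw [this]
  calc ‖K.orthogonalProjection v‖ ≤ ‖K.orthogonalProjection‖ * ‖v‖ :=
        (K.orthogonalProjection).le_opNorm v
    _ ≤ 1 * ‖v‖ := by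
        apply mul_le_mul_of_nonneg_right (Submodule.orthogonalProjection_norm_le K) (norm_nonneg v)
    _ = ‖v‖ := one_mul _

/-- Main classification guarantee: if the worst-case alignment
`η = max_{j ≠ k} ‖P_j P_k‖ < 1 - ε` and `‖ỹ⊥‖ ≤ ε ‖ỹ‖`, then the projection onto the
correct subspace `W_k` is strictly the largest, so classification by maximal
projection energy is correct. -/
theorem stmt2 {p d : ℕ} (W : Fin d → Submodule ℝ (EuclideanSpace ℝ (Fin p)))
    (k : Fin d) (ε : ℝ) (hε : 0 ≤ ε)
    (y ytil yperp : EuclideanSpace ℝ (Fin p))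
    (hytil : ytil ∈ W k) (hytil0 : ytil ≠ 0) (hyperp : yperp ∈ (W k)ᗮ)
    (hdecomp : y = ytil + yperp) (hsmall : ‖yperp‖ ≤ ε * ‖ytil‖)
    (hη : ∀ j, j ≠ k → ‖(proj (W j)).comp (proj (W k))‖ < 1 - ε) :
    ∀ j, j ≠ k → ‖proj (W j) y‖ < ‖proj (W k) y‖ := by
  intro j hj
  have hPkt : proj (W k) ytil = ytil := by
    exact (W k).starProjection_eq_self_iff.mpr hytil
  have hPkp : proj (W k) yperp = 0 := by
    simp [proj, Submodule.orthogonalProjectionOnto_apply_of_mem_orthogonal hyperp]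
  have hPky : proj (W k) y = ytil := by
    rw [hdecomp, map_add, hPkt, hPkp, add_zero]
  have hnt : (0:ℝ) < ‖ytil‖ := norm_pos_iff.mpr hytil0
  have h1 : ‖proj (W j) ytil‖ ≤ ‖(proj (W j)).comp (proj (W k))‖ * ‖ytil‖ := by
    have h := ((proj (W j)).comp (proj (W k))).le_opNorm ytil
    have heq : ((proj (W j)).comp (proj (W k))) ytil = proj (W j) ytil := by
      rw [ContinuousLinearMap.comp_apply, hPkt]
    rwa [heq] at h
  have h2 : ‖proj (W j) yperp‖ ≤ ε * ‖ytil‖ :=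
    (proj_norm_apply_le _ _).trans hsmall
  have h3 : ‖proj (W j) y‖ ≤ ‖proj (W j) ytil‖ + ‖proj (W j) yperp‖ := by
    rw [hdecomp, map_add]; exact norm_add_le _ _
  have hηj := hη j hj
  calc ‖proj (W j) y‖ ≤ ‖(proj (W j)).comp (proj (W k))‖ * ‖ytil‖ + ε * ‖ytil‖ := by
        linarith
    _ < (1 - ε) * ‖ytil‖ + ε * ‖ytil‖ := by
        have := mul_lt_mul_of_pos_right hηj hnt; linarith
    _ = ‖ytil‖ := by ring
    _ = ‖proj (W k) y‖ := by rw [hPky]
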